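/- Nagata's lemma: let A be an integral domain, and let p ∈ A be a prime element such that the localization A[p^{-1}] is a unique factorization domain and A is Noetherian (or: every element of A admits a factorization into irreducibles). Then A is a unique factorization domain. -/

import Mathlib

section NagataAux

variable {A : Type*} [CommRing A] [IsDomain A]
    {B : Type*} [CommRing B] [IsDomain B] [Algebra A B]

/-- If `¬ p ∣ q` and the image of `q` divides the image of `a` in `A[1/p]`, then `q ∣ a`. -/
theorem nagata_dvd_pullback (p : A) (hp : Prime p) [IsLocalization.Away p B]
    {q a : A} (hq : ¬ p ∣ q)
    (h : algebraMap A B q ∣ algebraMap A B a) : q ∣ a := by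
  have hinj : Function.Injective (algebraMap A B) :=
    IsLocalization.injective B
      (powers_le_nonZeroDivisors_of_noZeroDivisors hp.ne_zero)
  obtain ⟨x, hx⟩ := h
  obtain ⟨⟨c, s⟩, H⟩ := IsLocalization.surj (Submonoid.powers p) x
  obtain ⟨m, hm⟩ := (Submonoid.mem_powers_iff s.1 p).mp s.2
  -- a * p^m = q * c
  have key : a * p ^ m = q * c := by
    apply hinj
    rw [map_mul, map_mul, map_pow, hx, ← map_pow, hm, mul_assoc, H]
  clear hx H hm
  induction m generalizing c with
  | zero => exact ⟨c, by simpa using key⟩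
  | succ n ih =>
    have hpc : p ∣ c := by
      rcases hp.dvd_or_dvd (show p ∣ q * c from ⟨a * p ^ n, by linear_combination -key⟩) with h1 | h1
      · exact absurd h1 hq
      · exact h1
    obtain ⟨c', rfl⟩ := hpc
    refine ih c' (mul_left_cancel₀ hp.ne_zero ?_)
    linear_combination key

theorem nagata_isUnit_pullback (p : A) (hp : Prime p) [IsLocalization.Away p B]
    {a : A} (ha : ¬ p ∣ a) (h : IsUnit (algebraMap A B a)) : IsUnit a := by
  rw [isUnit_iff_dvd_one] at h ⊢
  have : algebraMap A B a ∣ algebraMap A B 1 := by simpa using h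
  exact nagata_dvd_pullback p hp ha this

end NagataAux

/-- Nagata's lemma: if `A` is a Noetherian integral domain, `p ∈ A` a
prime element such that the localization `A[p⁻¹]` is a UFD, then `A` is a UFD. -/
theorem stmt8 {A : Type*} [CommRing A] [IsDomain A] [IsNoetherianRing A]
    (p : A) (hp : Prime p)
    (B : Type*) [CommRing B] [IsDomain B] [Algebra A B] [IsLocalization.Away p B]
    (h : UniqueFactorizationMonoid B) :
    UniqueFactorizationMonoid A := by
  have wf : WfDvdMonoid A := inferInstance
  have hinj : Function.Injective (algebraMap A B) :=
    IsLocalization.injective B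
      (powers_le_nonZeroDivisors_of_noZeroDivisors hp.ne_zero)
  have key : ∀ q : A, Irreducible q → Prime q := by
    intro q hq
    by_cases hpq : p ∣ q
    · -- q is associated to p, hence prime
      obtain ⟨c, rfl⟩ := hpq
      rcases hq.isUnit_or_isUnit rfl with h1 | h1
      · exact absurd h1 hp.not_unit
      · exact ((associated_mul_unit_left p c h1).symm.prime hp)
    · -- show the image of q in B is irreducible, hence prime
      have hq0 : q ≠ 0 := hq.ne_zero
      have hfq0 : algebraMap A B q ≠ 0 := fun h0 => hq0 (hinj (by simpa using h0))
      have hirr : Irreducible (algebraMap A B q) := by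
        constructor
        · exact fun hu => hq.not_isUnit (nagata_isUnit_pullback p hp hpq hu)
        · intro x y hxy
          have hx0 : x ≠ 0 := fun h0 => hfq0 (by rw [hxy, h0, zero_mul])
          have hy0 : y ≠ 0 := fun h0 => hfq0 (by rw [hxy, h0, mul_zero])
          obtain ⟨a, n, hpa, hax⟩ :=
            exists_reduced_fraction' p B hx0 hp.irreducible
          obtain ⟨b, k, hpb, hby⟩ :=
            exists_reduced_fraction' p B hy0 hp.irreducible
          have heq : algebraMap A B q =
              selfZPow p B (n + k) *
                (algebraMap A B a * algebraMap A B b) := by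
            rw [hxy, ← hax, ← hby, selfZPow_add]; ring
          have hu : IsUnit (selfZPow p B n) :=
            IsUnit.of_mul_eq_one _ (selfZPow_mul_neg p B n)
          have hu' : IsUnit (selfZPow p B k) :=
            IsUnit.of_mul_eq_one _ (selfZPow_mul_neg p B k)
          rcases le_or_gt 0 (n + k) with ht | ht
          · -- q = p^(n+k).toNat * a * b in A
            have h1 : algebraMap A B q =
                algebraMap A B (p ^ (n + k).toNat * (a * b)) := by
              rw [heq]
              have : selfZPow p B (n + k) =
                  algebraMap A B p ^ (n + k).toNat := by
                rw [← selfZPow_natCast, Int.toNat_of_nonneg ht]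
              rw [this, map_mul, map_pow, map_mul]
            have h2 : q = p ^ (n + k).toNat * (a * b) := hinj h1
            have ht0 : (n + k).toNat = 0 := by
              by_contra h0
              obtain ⟨j, hj⟩ : ∃ j, (n + k).toNat = j + 1 := ⟨(n + k).toNat - 1, by omega⟩
              exact hpq ⟨p ^ j * (a * b), by rw [h2, hj]; ring⟩
            rw [ht0, pow_zero, one_mul] at h2
            rcases hq.isUnit_or_isUnit h2 with h3 | h3
            · left
              rw [← hax]
              exact hu.mul (h3.map (algebraMap A B))
            · right
              rw [← hby]
              exact hu'.mul (h3.map (algebraMap A B))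
          · -- n + k < 0 : q * p^m = a * b with m ≥ 1, contradiction
            exfalso
            set m : ℕ := (-(n + k)).toNat with hmdef
            have hm1 : 1 ≤ m := by omega
            have h1 : algebraMap A B (q * p ^ m) = algebraMap A B (a * b) := by
              rw [map_mul, map_pow, map_mul, heq]
              have : algebraMap A B p ^ m =
                  selfZPow p B (-(n + k)) := by
                rw [← selfZPow_natCast, hmdef,
                  Int.toNat_of_nonneg (by omega)]
              rw [this, mul_assoc, mul_comm (algebraMap A B a * algebraMap A B b),
                ← mul_assoc, selfZPow_mul_neg, one_mul]
            have h2 : q * p ^ m = a * b := hinj h1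
            obtain ⟨j, hj⟩ : ∃ j, m = j + 1 := ⟨m - 1, by omega⟩
            have hpab : p ∣ a * b := ⟨q * p ^ j, by rw [← h2, hj]; ring⟩
            rcases hp.dvd_or_dvd hpab with h3 | h3
            · exact hpa h3
            · exact hpb h3
      have hprime : Prime (algebraMap A B q) := h.irreducible_iff_prime.mp hirr
      refine ⟨hq0, hq.not_isUnit, fun a b hab => ?_⟩
      have hd : algebraMap A B q ∣ algebraMap A B a ∨ algebraMap A B q ∣ algebraMap A B b := by
        apply hprime.dvd_or_dvd
        rw [← map_mul]; exact map_dvd _ hab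
      rcases hd with h1 | h1
      · exact Or.inl (nagata_dvd_pullback p hp hpq h1)
      · exact Or.inr (nagata_dvd_pullback p hp hpq h1)
  exact { wf with irreducible_iff_prime := fun {a} => ⟨key a, Prime.irreducible⟩ }
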